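/- Fix q₀ ∈ (0, π/2) and c₀ ∈ (0, q₀/2]. Let Γ be a circuit with 0 ∈ INT(Γ) and set R = sup{ ‖z‖ : z ∈ Γ }. If θ_RG^MAX(Γ) ≤ 2c₀, then RG(Γ) ≠ ∅ and MPRG(Γ) ≤ R·csc(q₀/2)·θ_RG^MAX(Γ). -/

import Mathlib

open MeasureTheory Set Metric Filter
open scoped Classical ENNReal Topology Pointwise RealInnerProductSpace

noncomputable section

/-! ## The plane and the lattice -/

abbrev Z2 := ℤ × ℤ
abbrev E2 := EuclideanSpace ℝ (Fin 2)

/-- the point of `ℝ²` with the given coordinates -/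
def mk2 (a b : ℝ) : E2 := (WithLp.equiv 2 (Fin 2 → ℝ)).symm ![a, b]

/-- the embedding of the lattice `ℤ²` into the Euclidean plane -/
def toE2 (v : Z2) : E2 := mk2 v.1 v.2

/-- coordinatewise integer part -/
def fl (x : E2) : Z2 := (⌊x 0⌋, ⌊x 1⌋)

/-- nearest-neighbour adjacency on `ℤ²` -/
def Adj (a b : Z2) : Prop := (a.1 - b.1).natAbs + (a.2 - b.2).natAbs = 1

instance (a b : Z2) : Decidable (Adj a b) := by unfold Adj; infer_instance

/-- strict lexicographic order on `ℤ²` (used to orient edges) -/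
def lexLt (a b : Z2) : Prop := a.1 < b.1 ∨ (a.1 = b.1 ∧ a.2 < b.2)

instance (a b : Z2) : Decidable (lexLt a b) := by unfold lexLt; infer_instance

/-- weak lexicographic order on `ℤ²` -/
def lexLe (a b : Z2) : Prop := a.1 < b.1 ∨ (a.1 = b.1 ∧ a.2 ≤ b.2)

/-- a nearest-neighbour edge of `ℤ²`, recorded with lexicographically ordered endpoints -/
def IsEdge (e : Z2 × Z2) : Prop := Adj e.1 e.2 ∧ lexLt e.1 e.2

instance (e : Z2 × Z2) : Decidable (IsEdge e) := by unfold IsEdge; infer_instance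

abbrev Edge := {e : Z2 × Z2 // IsEdge e}

/-- a configuration: an assignment of open/closed to every edge of `ℤ²` -/
abbrev Config := Edge → Bool

/-- the edge between the adjacent sites `a` and `b` is open -/
def EOpen (ω : Config) (a b : Z2) : Prop :=
  (∃ h : IsEdge (a, b), ω ⟨(a, b), h⟩ = true) ∨ ∃ h : IsEdge (b, a), ω ⟨(b, a), h⟩ = true

/-- `x ↔ y` : `x` and `y` are joined by a path of open edges -/
def Conn (ω : Config) (x y : Z2) : Prop := Relation.ReflTransGen (EOpen ω) x y

/-- the edge between `a` and `b` is open and contained (as a subset of `ℝ²`) in `A` -/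
def EOpenIn (ω : Config) (A : Set E2) (a b : Z2) : Prop :=
  EOpen ω a b ∧ segment ℝ (toE2 a) (toE2 b) ⊆ A

/-- `x ↔^A y` : `x` and `y` are joined by a path of open edges contained in `A` -/
def ConnIn (ω : Config) (A : Set E2) (x y : Z2) : Prop :=
  Relation.ReflTransGen (EOpenIn ω A) x y

/-! ## Circuits -/

/-- a cycle in `ℤ²` that visits no vertex twice -/
structure Circuit where
  len : ℕ
  four_le : 4 ≤ len
  f : ZMod len → Z2
  inj : Function.Injective f
  adj : ∀ i, Adj (f i) (f (i + 1))

/-- the closed subset of `ℝ²` formed by the unit edges of the cycle -/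
def Circuit.carrier (Γ : Circuit) : Set E2 :=
  ⋃ i, segment ℝ (toE2 (Γ.f i)) (toE2 (Γ.f (i + 1)))

/-- all edges of the circuit are open -/
def Circuit.IsOpenCir (Γ : Circuit) (ω : Config) : Prop := ∀ i, EOpen ω (Γ.f i) (Γ.f (i + 1))

/-- `INT S`: the union of the bounded connected components of `ℝ² ∖ S`
(for a circuit, the bounded connected component of the complement) -/
def INT (S : Set E2) : Set E2 :=
  {x | x ∉ S ∧ Bornology.IsBounded (connectedComponentIn Sᶜ x)}

/-- planar Lebesgue measure, as a real number -/
def vol (S : Set E2) : ℝ := (volume S).toReal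

def IsCircuit (S : Set E2) : Prop := ∃ Γ : Circuit, Γ.carrier = S

/-- `S` is the carrier of an open circuit -/
def IsOpenCircuit (ω : Config) (S : Set E2) : Prop := ∃ Γ : Circuit, Γ.carrier = S ∧ Γ.IsOpenCir ω

/-- an outermost open circuit -/
def IsOutermost (ω : Config) (S : Set E2) : Prop :=
  IsOpenCircuit ω S ∧ ∀ S', IsOpenCircuit ω S' → INT S ⊆ INT S' → S' = S

/-- `Γ₀`: the unique outermost open circuit that surrounds the origin when exactly one
such circuit exists, and `∅` otherwise -/
def Gamma0 (ω : Config) : Set E2 :=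
  if h : ∃! S : Set E2, IsOutermost ω S ∧ (0 : E2) ∈ INT S then h.exists.choose else ∅

/-- `V(Γ) = Γ ∩ ℤ²` -/
def VSet (S : Set E2) : Set E2 := S ∩ Set.range toE2

/-- the boundary of the convex hull of `V(Γ)` -/
def hullB (S : Set E2) : Set E2 := frontier (convexHull ℝ (VSet S))

/-- maximum local roughness -/
def MLR (S : Set E2) : ℝ := sSup ((fun x => infDist x (hullB S)) '' VSet S)

/-- maximum facet length -/
def MFL (S : Set E2) : ℝ :=
  sSup {r : ℝ | ∃ x y : E2, r = dist x y ∧ segment ℝ x y ⊆ hullB S}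

/-- conditional probability `P(A ∣ B)` -/
def cP (P : Measure Config) (A B : Set Config) : ℝ := (P (A ∩ B)).toReal / (P B).toReal

/-! ## The random cluster measure -/

/-- the edges with both endpoints in `Λ` -/
def edgesIn (Λ : Finset Z2) : Finset (Z2 × Z2) := (Λ ×ˢ Λ).filter IsEdge

/-- a configuration on the edges within `Λ` -/
abbrev LConfig (Λ : Finset Z2) := {e // e ∈ edgesIn Λ} → Bool

def locOpen (Λ : Finset Z2) (η : LConfig Λ) (a b : Z2) : Prop :=
  (∃ h : (a, b) ∈ edgesIn Λ, η ⟨(a, b), h⟩ = true) ∨ ∃ h : (b, a) ∈ edgesIn Λ, η ⟨(b, a), h⟩ = true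

/-- `k(η)`: the number of connected components of the graph on `Λ` whose edge set is the
set of `η`-open edges within `Λ` -/
def kComp (Λ : Finset Z2) (η : LConfig Λ) : ℕ :=
  Set.ncard {C : Set Z2 | ∃ a ∈ Λ, C = {b | b ∈ Λ ∧ Relation.ReflTransGen (locOpen Λ η) a b}}

/-- the random-cluster weight `p^{#open} (1-p)^{#closed} q^{k(η)}` -/
def rcWeight (p q : ℝ) (Λ : Finset Z2) (η : LConfig Λ) : ℝ :=
  p ^ (Finset.univ.filter fun e => η e = true).card *
    (1 - p) ^ (Finset.univ.filter fun e => η e = false).card * q ^ kComp Λ η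

/-- the free random cluster probability on `Λ` of a set of local configurations -/
def rcProb (p q : ℝ) (Λ : Finset Z2) (S : Set (LConfig Λ)) : ℝ :=
  (∑ η : LConfig Λ, if η ∈ S then rcWeight p q Λ η else 0) / ∑ η : LConfig Λ, rcWeight p q Λ η

/-- the box `Λ_N = {-N, …, N}²` -/
def box (N : ℕ) : Finset Z2 := Finset.Icc (-(N : ℤ)) (N : ℤ) ×ˢ Finset.Icc (-(N : ℤ)) (N : ℤ)

/-- the hypotheses on the subcritical random-cluster measure `P` with parameters `p, q`:
(i) finite-volume free random-cluster measures on the boxes `Λ_N` converge to `P` on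
cylinder events; (ii) exponential decay of connectivity. -/
def IsSubcriticalRC (p q : ℝ) (P : Measure Config) : Prop :=
  (∀ (F : Finset Edge) (ζ : Edge → Bool),
      Tendsto
        (fun N : ℕ => rcProb p q (box N)
          {η | ∀ e ∈ F, ∀ h : (e : Z2 × Z2) ∈ edgesIn (box N), η ⟨(e : Z2 × Z2), h⟩ = ζ e})
        atTop (𝓝 ((P {ω | ∀ e ∈ F, ω e = ζ e}).toReal))) ∧
  ∃ c C : ℝ, 0 < c ∧ 0 < C ∧ ∀ N : ℕ,
    (P {ω | ∃ x : Z2, x ∉ box N ∧ Conn ω 0 x}).toReal ≤ C * Real.exp (-c * N)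

/-! ## The Wulff shape, global distortion, centring and the event `AREA` -/

/-- the Wulff shape `λ • ⋂_{u ∈ S¹} {t : ⟨t,u⟩ ≤ ξ(u)}` -/
def wulff (ξ : E2 → ℝ) (lam : ℝ) : Set E2 :=
  lam • ⋂ u ∈ sphere (0 : E2) 1, {t : E2 | (inner ℝ t u : ℝ) ≤ ξ u}

/-- the Hausdorff distance of `S` from the translate by `z` of `n ∂𝒲` -/
def gdVal (ξ : E2 → ℝ) (lam : ℝ) (n : ℕ) (z : Z2) (S : Set E2) : ℝ :=
  hausdorffDist ((fun y => y + toE2 z) '' ((n : ℝ) • frontier (wulff ξ lam))) S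

/-- global distortion -/
def GD (ξ : E2 → ℝ) (lam : ℝ) (n : ℕ) (S : Set E2) : ℝ := ⨅ z : Z2, gdVal ξ lam n z S

/-- `z` is the lexicographically minimal minimiser in the definition of `GD` -/
def IsCen (ξ : E2 → ℝ) (lam : ℝ) (n : ℕ) (S : Set E2) (z : Z2) : Prop :=
  gdVal ξ lam n z S = GD ξ lam n S ∧ ∀ z', gdVal ξ lam n z' S = GD ξ lam n S → lexLe z z'

/-- the centre of a circuit -/
def cen (ξ : E2 → ℝ) (lam : ℝ) (n : ℕ) (S : Set E2) : Z2 :=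
  if h : ∃ z, IsCen ξ lam n S z then h.choose else 0

/-- the event `AREA_{0,A} = {|INT(Γ₀)| ≥ A} ∩ {cen(Γ₀) = 0}` (centring at scale `n`) -/
def AREA (ξ : E2 → ℝ) (lam : ℝ) (n : ℕ) (A : ℝ) : Set Config :=
  {ω | A ≤ vol (INT (Gamma0 ω)) ∧ cen ξ lam n (Gamma0 ω) = 0}

/-- the hypotheses on the inverse correlation length `ξ` and the Wulff normalisation `lam` -/
def WulffHyp (P : Measure Config) (ξ : E2 → ℝ) (lam : ℝ) : Prop :=
  (∀ x : E2,
      Tendsto (fun k : ℕ => -((k : ℝ)⁻¹) * Real.log ((P {ω | Conn ω 0 (fl ((k : ℝ) • x))}).toReal))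
        atTop (𝓝 (ξ x))) ∧
    0 < lam ∧ volume (wulff ξ lam) = 1

/-! ## Angles, cones and sectors -/

/-- the angle between two vectors of `ℝ²` -/
def ang (u w : E2) : ℝ := InnerProductGeometry.angle u w

/-- rotation by `π/2` counterclockwise -/
def perp (v : E2) : E2 := mk2 (-(v 1)) (v 0)

/-- the forward cone `C^F_{π/2 - q₀}(v)` -/
def coneF (q₀ : ℝ) (v : E2) : Set E2 := insert v {w | ang (w - v) (perp v) ≤ Real.pi / 2 - q₀}

/-- the backward cone `C^B_{π/2 - q₀}(v)` -/
def coneB (q₀ : ℝ) (v : E2) : Set E2 := insert v {w | ang (w - v) (-perp v) ≤ Real.pi / 2 - q₀}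

/-- the cone `W_{v,c}` with apex `0` about the direction of `v`, of half-aperture `c` -/
def coneDir (v : E2) (c : ℝ) : Set E2 := insert 0 {z | z ≠ 0 ∧ ang z v ≤ c}

/-- the argument of a point of the plane -/
def argOf (z : E2) : ℝ := Complex.arg ⟨z 0, z 1⟩

/-- reduction modulo `2π` to `[0, 2π)` -/
def mod2pi (t : ℝ) : ℝ := t - 2 * Real.pi * ⌊t / (2 * Real.pi)⌋

/-- the unit vector of argument `θ` -/
def dirE (θ : ℝ) : E2 := mk2 (Real.cos θ) (Real.sin θ)

/-- the closed angular sector `A_{x,y}` with apex `0` swept counterclockwise from the ray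
through `x` to the ray through `y` -/
def sector (x y : E2) : Set E2 :=
  insert 0 {z | ∃ r s : ℝ, 0 < r ∧ 0 ≤ s ∧ s ≤ mod2pi (argOf y - argOf x) ∧
    z = r • dirE (argOf x + s)}

/-! ## Open clusters, open paths, good area capture -/

/-- the open cluster of `x`, as the union of the closed open edges of its component -/
def cluster (ω : Config) (x : Z2) : Set E2 :=
  ⋃ (a : Z2) (b : Z2) (_ : Conn ω x a ∧ EOpen ω a b), segment ℝ (toE2 a) (toE2 b)

/-- the open cluster of `x` within the region `A` -/
def clusterIn (ω : Config) (A : Set E2) (x : Z2) : Set E2 :=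
  ⋃ (a : Z2) (b : Z2) (_ : ConnIn ω A x a ∧ EOpenIn ω A a b), segment ℝ (toE2 a) (toE2 b)

/-- the common open cluster `γ'_{x,y}` of `x` and `y` -/
def cluster2 (ω : Config) (x y : Z2) : Set E2 := cluster ω x ∩ cluster ω y

/-- `fluc_{x,y}(S)`: the maximal distance of a point of `S` from the segment `[x,y]` -/
def fluc (x y : Z2) (S : Set E2) : ℝ :=
  sSup ((fun z => infDist z (segment ℝ (toE2 x) (toE2 y))) '' S)

/-- `S` is (the carrier of) an open path from `x` to `y` contained in `A` -/
def IsOpenPathIn (ω : Config) (A : Set E2) (x y : Z2) (S : Set E2) : Prop :=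
  ∃ l : List Z2, l.Nodup ∧ l.head? = some x ∧ l.getLast? = some y ∧
    List.Chain' (EOpenIn ω A) l ∧
    S = ⋃ p ∈ l.zip l.tail, segment ℝ (toE2 p.1) (toE2 p.2)

/-- the union of the bounded connected components of `A ∖ S` -/
def boundedCompIn (A S : Set E2) : Set E2 :=
  {z | z ∈ A \ S ∧ Bornology.IsBounded (connectedComponentIn (A \ S) z)}

/-- the event `GAC(x,y,ε)` of `ε`-good area capture in the sector `A_{x,y}` -/
def GAC (q₀ : ℝ) (ω : Config) (x y : Z2) (ε : ℝ) : Prop :=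
  ConnIn ω (sector (toE2 x) (toE2 y)) x y ∧
  clusterIn ω (sector (toE2 x) (toE2 y)) x ⊆
    coneF (q₀ / 2) (toE2 x) ∩ coneB (q₀ / 2) (toE2 y) ∧
  ∃ S : Set E2,
    (IsOpenPathIn ω (sector (toE2 x) (toE2 y)) x y S ∧
      ∀ S', IsOpenPathIn ω (sector (toE2 x) (toE2 y)) x y S' →
        boundedCompIn (sector (toE2 x) (toE2 y)) S ⊆
          boundedCompIn (sector (toE2 x) (toE2 y)) S' → S' = S) ∧
    diam S ≤ 2 * dist (toE2 x) (toE2 y) ∧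
    vol (convexHull ℝ {0, toE2 x, toE2 y}) +
        ε * dist (toE2 x) (toE2 y) ^ (3 / 2 : ℝ) *
          Real.log (dist (toE2 x) (toE2 y)) ^ (1 / 2 : ℝ) ≤
      vol (boundedCompIn (sector (toE2 x) (toE2 y)) S)

/-- the edge `e`, as a closed unit segment of `ℝ²` -/
def edgeSeg (e : Edge) : Set E2 := segment ℝ (toE2 (e : Z2 × Z2).1) (toE2 (e : Z2 × Z2).2)

/-! ## Mixing properties -/

/-- the σ-algebra `σ_A` generated by the edge variables in `A` -/
def sigmaOn (A : Set Edge) : MeasurableSpace Config :=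
  MeasurableSpace.comap (fun (ω : Config) (e : A) => ω (e : Edge)) inferInstance

/-- `V(A)`: the endpoints of the edges of `A` -/
def VE (A : Set Edge) : Set Z2 := {v | ∃ e ∈ A, (e : Z2 × Z2).1 = v ∨ (e : Z2 × Z2).2 = v}

/-- the ratio-weak-mixing property with constants `Cr, lam` -/
def RWM (Cr lam : ℝ) (P : Measure Config) : Prop :=
  ∀ 𝒟 ℱ : Set Edge,
    Cr * ∑' (x : VE 𝒟) (y : VE ℱ), Real.exp (-lam * dist (toE2 (x : Z2)) (toE2 (y : Z2))) < 1 →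
    ∀ D F : Set Config, MeasurableSet[sigmaOn 𝒟] D → MeasurableSet[sigmaOn ℱ] F →
      0 < (P D).toReal * (P F).toReal →
      |(P (D ∩ F)).toReal / ((P D).toReal * (P F).toReal) - 1| ≤
        Cr * ∑' (x : VE 𝒟) (y : VE ℱ), Real.exp (-lam * dist (toE2 (x : Z2)) (toE2 (y : Z2)))

/-- the bounded energy property with constant `cbe` -/
def BddEnergy (cbe : ℝ) (P : Measure Config) : Prop :=
  ∀ (e : Edge) (F : Set Config), MeasurableSet[sigmaOn {e}ᶜ] F →
    cbe * (P F).toReal ≤ (P (F ∩ {ω | ω e = true})).toReal ∧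
      (P (F ∩ {ω | ω e = true})).toReal ≤ (1 - cbe) * (P F).toReal

/-- `κ_m(A,B)` -/
def kappa (lam m : ℝ) (A B : Set Edge) : ℝ :=
  ∑' (x : VE A) (y : VE B),
    if m ≤ dist (toE2 (x : Z2)) (toE2 (y : Z2)) then
      Real.exp (-lam * dist (toE2 (x : Z2)) (toE2 (y : Z2))) else 0

/-- `φ_m(A,B)`: the number of pairs of edges of `A × B` within distance `m` of each other -/
def phiCount (m : ℝ) (A B : Set Edge) : ℕ∞ :=
  {ab : Edge × Edge | ab.1 ∈ A ∧ ab.2 ∈ B ∧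
    ∃ u ∈ edgeSeg ab.1, ∃ v ∈ edgeSeg ab.2, dist u v ≤ m}.encard

/-- `A` and `B` are `(m₀, C₂)`-well separated -/
def WellSep (Cr lam : ℝ) (m₀ C₂ : ℕ) (A B : Set Edge) : Prop :=
  A ∩ B = ∅ ∧ kappa lam m₀ A B ≤ 1 / (2 * Cr) ∧ phiCount (m₀ : ℝ) A B ≤ (C₂ : ℕ∞)

/-! ## Regeneration sites -/

/-- the set of `Γ`-regeneration sites -/
def RG (q₀ c₀ : ℝ) (Γ : Set E2) : Set Z2 :=
  {v | toE2 v ∈ Γ ∧ Γ ∩ coneDir (toE2 v) c₀ ⊆ coneF q₀ (toE2 v) ∪ coneB q₀ (toE2 v)}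

/-- `θ_RG^MAX(Γ)`: the maximal angle of a sector rooted at the origin free of regeneration
sites -/
def thetaRGMax (q₀ c₀ : ℝ) (Γ : Set E2) : ℝ :=
  sSup {r : ℝ | r ∈ Set.Icc 0 (2 * Real.pi) ∧
    ∃ a : E2, ‖a‖ = 1 ∧ coneDir a (r / 2) ∩ (toE2 '' RG q₀ c₀ Γ) = ∅}

/-- the counterclockwise angular displacement from `x` to `u` -/
def ccwDisp (x u : E2) : ℝ := mod2pi (argOf u - argOf x)

/-- `u` is a regeneration site first encountered in a counterclockwise (or clockwise) angular
search about the origin beginning at `x` -/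
def IsFirstRG (q₀ c₀ : ℝ) (Γ : Set E2) (x u : Z2) : Prop :=
  u ∈ RG q₀ c₀ Γ ∧
    ((∀ w ∈ RG q₀ c₀ Γ, ccwDisp (toE2 x) (toE2 u) ≤ ccwDisp (toE2 x) (toE2 w)) ∨
      ∀ w ∈ RG q₀ c₀ Γ, ccwDisp (toE2 u) (toE2 x) ≤ ccwDisp (toE2 w) (toE2 x))

/-- the maximum point-to-regeneration-site distance -/
def MPRG (q₀ c₀ : ℝ) (Γ : Set E2) : ℝ :=
  sSup {d : ℝ | ∃ x : Z2, toE2 x ∈ Γ ∧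
    ∃ u : Z2, IsFirstRG q₀ c₀ Γ x u ∧ d = dist (toE2 x) (toE2 u)}

/-! ## Translation of configurations -/

/-- the translate of the edge `e` by `v` -/
def shiftE (v : Z2) (e : Edge) : Edge :=
  ⟨((e.1.1.1 + v.1, e.1.1.2 + v.2), (e.1.2.1 + v.1, e.1.2.2 + v.2)), by
    obtain ⟨h1, h2⟩ := e.2
    unfold IsEdge Adj lexLt at *
    exact ⟨by simp only at h1 ⊢; omega, by simp only at h2 ⊢; omega⟩⟩

/-- the shifted configuration `ω_v(e) = ω(e + v)` -/
def shiftC (v : Z2) (ω : Config) : Config := fun e => ω (shiftE v e)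

section MprgAux

lemma inner2 (z w : E2) : ⟪z, w⟫ = z 0 * w 0 + z 1 * w 1 := by
  simp [PiLp.inner_apply, Fin.sum_univ_two, RCLike.inner_apply, mul_comm]
lemma normsq2 (z : E2) : ‖z‖ ^ 2 = z 0 ^ 2 + z 1 ^ 2 := by
  rw [EuclideanSpace.norm_eq]
  rw [Real.sq_sqrt (by positivity)]
  simp [Fin.sum_univ_two, sq_abs]

lemma perp0 (v : E2) : perp v 0 = -(v 1) := rfl
lemma perp1 (v : E2) : perp v 1 = v 0 := rfl

lemma inner_perp_self (v : E2) : ⟪v, perp v⟫ = 0 := by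
  rw [inner2, perp0, perp1]; ring

lemma norm_perp (v : E2) : ‖perp v‖ = ‖v‖ := by
  have h := normsq2 (perp v)
  rw [perp0, perp1] at h
  have h2 := normsq2 v
  nlinarith [norm_nonneg v, norm_nonneg (perp v)]

lemma pyth (w v : E2) : ⟪w, v⟫ ^ 2 + ⟪w, perp v⟫ ^ 2 = (‖w‖ * ‖v‖) ^ 2 := by
  rw [inner2, inner2, perp0, perp1, mul_pow, normsq2, normsq2]; ring

lemma e2_ext {z : E2} (h0 : z 0 = 0) (h1 : z 1 = 0) : z = 0 := by
  ext i
  fin_cases i <;> simpa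

def cplx (z : E2) : ℂ := ⟨z 0, z 1⟩

lemma cplx_ne_zero {z : E2} (hz : z ≠ 0) : cplx z ≠ 0 := by
  intro h
  apply hz
  have h0 : z 0 = 0 := congrArg Complex.re h
  have h1 : z 1 = 0 := congrArg Complex.im h
  exact e2_ext h0 h1

lemma abs_cplx (z : E2) : ‖cplx z‖ = ‖z‖ := by
  have : ‖cplx z‖ = Real.sqrt (z 0 ^ 2 + z 1 ^ 2) := by
    rw [Complex.norm_def, Complex.normSq_apply]; norm_num [cplx]; ring_nf
  rw [this, EuclideanSpace.norm_eq]
  congr 1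
  simp [Fin.sum_univ_two, sq_abs]


lemma coord0_eq (z : E2) (hz : z ≠ 0) : z 0 = ‖z‖ * Real.cos (argOf z) := by
  have h := Complex.cos_arg (cplx_ne_zero hz)
  rw [abs_cplx] at h
  have hn : ‖z‖ ≠ 0 := by simpa using hz
  show z 0 = _
  rw [show argOf z = (cplx z).arg from rfl, h]
  field_simp [cplx]; rfl

lemma coord1_eq (z : E2) (hz : z ≠ 0) : z 1 = ‖z‖ * Real.sin (argOf z) := by
  have h := Complex.sin_arg (cplx z)
  rw [abs_cplx] at h
  have hn : ‖z‖ ≠ 0 := by simpa using hz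
  rw [show argOf z = (cplx z).arg from rfl, h]
  field_simp [cplx]; rfl

lemma inner_eq_cos_argdiff (z w : E2) (hz : z ≠ 0) (hw : w ≠ 0) :
    ⟪z, w⟫ = ‖z‖ * ‖w‖ * Real.cos (argOf z - argOf w) := by
  rw [inner2, coord0_eq z hz, coord1_eq z hz, coord0_eq w hw, coord1_eq w hw,
    Real.cos_sub]
  ring

lemma ang_eq_arccos (z w : E2) (hz : z ≠ 0) (hw : w ≠ 0) :
    ang z w = Real.arccos (Real.cos (argOf z - argOf w)) := by
  have hnz : ‖z‖ ≠ 0 := by simpa using hz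
  have hnw : ‖w‖ ≠ 0 := by simpa using hw
  show InnerProductGeometry.angle z w = _
  rw [InnerProductGeometry.angle, inner_eq_cos_argdiff z w hz hw]
  congr 1
  field_simp

lemma arccos_antitone {a b : ℝ} (h : a ≤ b) : Real.arccos b ≤ Real.arccos a := by
  rw [Real.arccos, Real.arccos]
  have := Real.monotone_arcsin h
  linarith

lemma two_pi_pos : (0:ℝ) < 2 * Real.pi := by positivity

lemma mod2pi_nonneg (t : ℝ) : 0 ≤ mod2pi t := by
  rw [mod2pi, sub_nonneg]
  have h := Int.floor_le (t / (2 * Real.pi))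
  have h2 := two_pi_pos
  have h3 : (⌊t / (2 * Real.pi)⌋ : ℝ) * (2 * Real.pi) ≤ t / (2 * Real.pi) * (2 * Real.pi) :=
    mul_le_mul_of_nonneg_right h h2.le
  rw [div_mul_cancel₀ _ (ne_of_gt h2)] at h3
  linarith

lemma mod2pi_lt (t : ℝ) : mod2pi t < 2 * Real.pi := by
  rw [mod2pi]
  have h := Int.lt_floor_add_one (t / (2 * Real.pi))
  have h2 := two_pi_pos
  have : t / (2 * Real.pi) * (2 * Real.pi) < (⌊t / (2 * Real.pi)⌋ + 1) * (2 * Real.pi) := by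
    apply mul_lt_mul_of_pos_right h h2
  rw [div_mul_cancel₀ _ (ne_of_gt h2)] at this
  linarith

lemma mod2pi_sub (t : ℝ) : ∃ k : ℤ, t - mod2pi t = 2 * Real.pi * k := ⟨⌊t / (2 * Real.pi)⌋, by rw [mod2pi]; ring⟩

lemma cos_mod2pi (t : ℝ) : Real.cos (mod2pi t) = Real.cos t := by
  rw [mod2pi]
  have : t - 2 * Real.pi * ⌊t / (2 * Real.pi)⌋ = t + (-⌊t / (2 * Real.pi)⌋ : ℤ) * (2 * Real.pi) := by
    push_cast; ring
  rw [this, Real.cos_add_int_mul_two_pi]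

lemma dirE0 (θ : ℝ) : dirE θ 0 = Real.cos θ := rfl
lemma dirE1 (θ : ℝ) : dirE θ 1 = Real.sin θ := rfl

lemma norm_dirE (θ : ℝ) : ‖dirE θ‖ = 1 := by
  have h := normsq2 (dirE θ)
  rw [dirE0, dirE1] at h
  have : ‖dirE θ‖ ^ 2 = 1 := by rw [h]; exact Real.sin_sq_add_cos_sq θ ▸ by nlinarith [Real.sin_sq_add_cos_sq θ]
  nlinarith [norm_nonneg (dirE θ)]

lemma smul_coord (t : ℝ) (z : E2) (i : Fin 2) : (t • z) i = t * z i := rfl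

lemma inner_smul_dirE (t : ℝ) (φ : ℝ) (w : E2) (hw : w ≠ 0) :
    ⟪t • dirE φ, w⟫ = t * ‖w‖ * Real.cos (φ - argOf w) := by
  rw [inner2, smul_coord, smul_coord, dirE0, dirE1, coord0_eq w hw, coord1_eq w hw, Real.cos_sub]
  ring

lemma norm_smul_dirE (t : ℝ) (φ : ℝ) (ht : 0 ≤ t) : ‖t • dirE φ‖ = t := by
  rw [norm_smul, norm_dirE, Real.norm_eq_abs, abs_of_nonneg ht, mul_one]

lemma ang_smul_dirE_le (t : ℝ) (φ : ℝ) (w : E2) (ht : 0 < t) (hw : w ≠ 0) (d : ℝ)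
    (hd0 : 0 ≤ d) (hdpi : d ≤ Real.pi) (hcos : Real.cos d ≤ Real.cos (φ - argOf w)) :
    ang (t • dirE φ) w ≤ d := by
  have hnw : ‖w‖ ≠ 0 := by simpa using hw
  show InnerProductGeometry.angle _ w ≤ d
  rw [InnerProductGeometry.angle, inner_smul_dirE t φ w hw, norm_smul_dirE t φ ht.le]
  have : t * ‖w‖ * Real.cos (φ - argOf w) / (t * ‖w‖) = Real.cos (φ - argOf w) := by
    field_simp
  rw [this]
  calc Real.arccos (Real.cos (φ - argOf w)) ≤ Real.arccos (Real.cos d) := arccos_antitone hcos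
    _ = d := Real.arccos_cos hd0 hdpi

lemma ang_le_of_cos (z w : E2) (hz : z ≠ 0) (hw : w ≠ 0) (d : ℝ)
    (hd0 : 0 ≤ d) (hdpi : d ≤ Real.pi) (hcos : Real.cos d ≤ Real.cos (argOf z - argOf w)) :
    ang z w ≤ d := by
  rw [ang_eq_arccos z w hz hw]
  calc Real.arccos (Real.cos (argOf z - argOf w)) ≤ Real.arccos (Real.cos d) := arccos_antitone hcos
    _ = d := Real.arccos_cos hd0 hdpi

lemma cos_argdiff_of_ang_le (z w : E2) (hz : z ≠ 0) (hw : w ≠ 0) (d : ℝ)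
    (hdpi : d ≤ Real.pi) (h : ang z w ≤ d) : Real.cos d ≤ Real.cos (argOf z - argOf w) := by
  have h1 : Real.cos (ang z w) = ⟪z, w⟫ / (‖z‖ * ‖w‖) := InnerProductGeometry.cos_angle z w
  have h2 : Real.cos (ang z w) = Real.cos (argOf z - argOf w) := by
    have hnz : ‖z‖ ≠ 0 := by simpa using hz
    have hnw : ‖w‖ ≠ 0 := by simpa using hw
    rw [h1, inner_eq_cos_argdiff z w hz hw]
    field_simp
  rw [← h2]
  exact Real.cos_le_cos_of_nonneg_of_le_pi (InnerProductGeometry.angle_nonneg z w) hdpi h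


lemma sin_le_sin {a b : ℝ} (ha : 0 ≤ a) (hb : b ≤ Real.pi / 2) (h : a ≤ b) :
    Real.sin a ≤ Real.sin b := by
  have := Real.pi_pos
  rcases eq_or_lt_of_le h with rfl | hlt
  · exact le_refl _
  · exact le_of_lt (Real.strictMonoOn_sin ⟨by linarith, by linarith⟩ ⟨by linarith, hb⟩ hlt)

lemma sin_ang_mul (p v : E2) (hp : p ≠ 0) (hv : v ≠ 0) :
    Real.sin (ang p v) * (‖p‖ * ‖v‖) = |⟪p, perp v⟫| := by
  have hp' : 0 < ‖p‖ := norm_pos_iff.mpr hp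
  have hv' : 0 < ‖v‖ := norm_pos_iff.mpr hv
  have hN : 0 < ‖p‖ * ‖v‖ := mul_pos hp' hv'
  have hr : Real.cos (ang p v) = ⟪p, v⟫ / (‖p‖ * ‖v‖) := InnerProductGeometry.cos_angle p v
  have hsin : Real.sin (ang p v) = Real.sqrt (1 - (⟪p, v⟫ / (‖p‖ * ‖v‖)) ^ 2) := by
    show Real.sin (InnerProductGeometry.angle p v) = _
    rw [InnerProductGeometry.angle, Real.sin_arccos]
  rw [hsin]
  have h1 : (1 - (⟪p, v⟫ / (‖p‖ * ‖v‖)) ^ 2) = ⟪p, perp v⟫ ^ 2 / (‖p‖ * ‖v‖) ^ 2 := by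
    have hpy := pyth p v
    have hsum : ⟪p, v⟫ ^ 2 / (‖p‖ * ‖v‖) ^ 2 + ⟪p, perp v⟫ ^ 2 / (‖p‖ * ‖v‖) ^ 2 = 1 := by
      rw [← add_div, hpy, div_self (by positivity)]
    rw [div_pow]
    linarith
  rw [h1, show ⟪p, perp v⟫ ^ 2 / (‖p‖ * ‖v‖) ^ 2 = (⟪p, perp v⟫ / (‖p‖ * ‖v‖)) ^ 2 by ring,
    Real.sqrt_sq_eq_abs, abs_div, abs_of_pos hN]
  field_simp

lemma cone_estimates (v p : E2) (hv : v ≠ 0) (hp : p ≠ 0) (q₀ R β : ℝ)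
    (hq0 : 0 < q₀) (hq1 : q₀ ≤ Real.pi / 2)
    (hcone : p ∈ coneF q₀ v ∪ coneB q₀ v)
    (hang : ang p v ≤ β) (hβ0 : 0 ≤ β) (hβ : β ≤ Real.pi / 2) (hpR : ‖p‖ ≤ R) :
    ‖p - v‖ ≤ R * Real.sin β / Real.sin q₀ ∧
      |‖p‖ - ‖v‖| ≤ R * (Real.sin β * Real.cos q₀ / Real.sin q₀ + (1 - Real.cos β)) := by
  have hpi := Real.pi_pos
  have hsq : 0 < Real.sin q₀ := Real.sin_pos_of_pos_of_lt_pi hq0 (by linarith)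
  have hcq : 0 ≤ Real.cos q₀ := Real.cos_nonneg_of_mem_Icc ⟨by linarith, hq1⟩
  have hsβ : 0 ≤ Real.sin β := Real.sin_nonneg_of_nonneg_of_le_pi hβ0 (by linarith)
  have hcβ : Real.cos β ≤ 1 := Real.cos_le_one β
  have hp' : 0 < ‖p‖ := norm_pos_iff.mpr hp
  have hv' : 0 < ‖v‖ := norm_pos_iff.mpr hv
  have hR : 0 ≤ R := le_trans hp'.le hpR
  by_cases hpv : p = v
  · constructor
    · rw [hpv, sub_self, norm_zero]; positivity
    · rw [hpv, sub_self, abs_zero]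
      have : 0 ≤ 1 - Real.cos β := by linarith
      positivity
  · have hw : p - v ≠ 0 := sub_ne_zero.mpr hpv
    have hw' : 0 < ‖p - v‖ := norm_pos_iff.mpr hw
    -- key : |⟪p - v, perp v⟫| ≥ ‖p - v‖ * ‖v‖ * sin q₀
    have hkey : ‖p - v‖ * ‖v‖ * Real.sin q₀ ≤ |⟪p - v, perp v⟫| := by
      have hq2 : 0 ≤ Real.pi / 2 - q₀ := by linarith
      have hq3 : Real.pi / 2 - q₀ ≤ Real.pi := by linarith
      rcases hcone with hF | hB
      · rcases hF with h | h
        · exact absurd h hpv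
        · have h1 : Real.cos (ang (p - v) (perp v)) = ⟪p - v, perp v⟫ / (‖p - v‖ * ‖perp v‖) :=
            InnerProductGeometry.cos_angle _ _
          have h2 : Real.cos (Real.pi / 2 - q₀) ≤ Real.cos (ang (p - v) (perp v)) :=
            Real.cos_le_cos_of_nonneg_of_le_pi (InnerProductGeometry.angle_nonneg _ _) hq3 h
          rw [Real.cos_pi_div_two_sub] at h2
          rw [h1, norm_perp] at h2
          have h3 : ‖p - v‖ * ‖v‖ * Real.sin q₀ ≤ ⟪p - v, perp v⟫ := by
            have := mul_le_mul_of_nonneg_right h2 (by positivity : (0:ℝ) ≤ ‖p - v‖ * ‖v‖)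
            rwa [div_mul_cancel₀ _ (by positivity), mul_comm] at this
          exact le_trans h3 (le_abs_self _)
      · rcases hB with h | h
        · exact absurd h hpv
        · have h1 : Real.cos (ang (p - v) (-perp v)) = ⟪p - v, -perp v⟫ / (‖p - v‖ * ‖-perp v‖) :=
            InnerProductGeometry.cos_angle _ _
          have h2 : Real.cos (Real.pi / 2 - q₀) ≤ Real.cos (ang (p - v) (-perp v)) :=
            Real.cos_le_cos_of_nonneg_of_le_pi (InnerProductGeometry.angle_nonneg _ _) hq3 h
          rw [Real.cos_pi_div_two_sub] at h2
          rw [h1, norm_neg, norm_perp, inner_neg_right] at h2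
          have h3 : ‖p - v‖ * ‖v‖ * Real.sin q₀ ≤ -⟪p - v, perp v⟫ := by
            have := mul_le_mul_of_nonneg_right h2 (by positivity : (0:ℝ) ≤ ‖p - v‖ * ‖v‖)
            rwa [div_mul_cancel₀ _ (by positivity), mul_comm] at this
          exact le_trans h3 (neg_le_abs _)
    have hip : ⟪p - v, perp v⟫ = ⟪p, perp v⟫ := by
      rw [inner_sub_left, inner_perp_self, sub_zero]
    have hsin_ang : Real.sin (ang p v) * (‖p‖ * ‖v‖) = |⟪p, perp v⟫| := sin_ang_mul p v hp hv
    have hang0 : 0 ≤ ang p v := InnerProductGeometry.angle_nonneg p v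
    have hsinang : Real.sin (ang p v) ≤ Real.sin β := sin_le_sin hang0 hβ hang
    -- chord bound
    have hchord : ‖p - v‖ ≤ R * Real.sin β / Real.sin q₀ := by
      rw [hip] at hkey
      rw [← hsin_ang] at hkey
      have h4 : ‖p - v‖ * ‖v‖ * Real.sin q₀ ≤ Real.sin β * (R * ‖v‖) := by
        calc ‖p - v‖ * ‖v‖ * Real.sin q₀ ≤ Real.sin (ang p v) * (‖p‖ * ‖v‖) := hkey
          _ ≤ Real.sin β * (R * ‖v‖) := by
              apply mul_le_mul hsinang (by nlinarith) (by positivity) hsβ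
      rw [le_div_iff₀ hsq]
      nlinarith
    refine ⟨hchord, ?_⟩
    -- radial bound
    have hcos_angle : ⟪p, v⟫ = Real.cos (ang p v) * (‖p‖ * ‖v‖) := by
      have h6 : Real.cos (ang p v) = ⟪p, v⟫ / (‖p‖ * ‖v‖) := InnerProductGeometry.cos_angle p v
      rw [h6]; field_simp
    have hinv : |⟪p - v, v⟫| ≤ ‖p - v‖ * ‖v‖ * Real.cos q₀ := by
      have hpy := pyth (p - v) v
      have h5 : ⟪p - v, v⟫ ^ 2 ≤ (‖p - v‖ * ‖v‖ * Real.cos q₀) ^ 2 := by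
        have hk2 : (‖p - v‖ * ‖v‖ * Real.sin q₀) ^ 2 ≤ ⟪p - v, perp v⟫ ^ 2 := by
          have h00 : (0:ℝ) ≤ ‖p - v‖ * ‖v‖ * Real.sin q₀ := by positivity
          have := sq_le_sq' (by linarith [abs_nonneg (⟪p - v, perp v⟫)] : -(|⟪p - v, perp v⟫|) ≤ ‖p - v‖ * ‖v‖ * Real.sin q₀) hkey
          calc (‖p - v‖ * ‖v‖ * Real.sin q₀) ^ 2 ≤ |⟪p - v, perp v⟫| ^ 2 := this
            _ = ⟪p - v, perp v⟫ ^ 2 := sq_abs _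
        have hpyth2 : Real.sin q₀ ^ 2 + Real.cos q₀ ^ 2 = 1 := Real.sin_sq_add_cos_sq q₀
        nlinarith [hpy]
      have hC : 0 ≤ ‖p - v‖ * ‖v‖ * Real.cos q₀ := by positivity
      calc |⟪p - v, v⟫| = Real.sqrt (⟪p - v, v⟫ ^ 2) := (Real.sqrt_sq_eq_abs _).symm
        _ ≤ Real.sqrt ((‖p - v‖ * ‖v‖ * Real.cos q₀) ^ 2) := Real.sqrt_le_sqrt h5
        _ = ‖p - v‖ * ‖v‖ * Real.cos q₀ := Real.sqrt_sq hC
    have hid : (‖p‖ - ‖v‖) * ‖v‖ = ⟪p - v, v⟫ + ‖p‖ * ‖v‖ * (1 - Real.cos (ang p v)) := by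
      rw [inner_sub_left, real_inner_self_eq_norm_sq, hcos_angle]
      ring
    have hcosangβ : Real.cos β ≤ Real.cos (ang p v) :=
      Real.cos_le_cos_of_nonneg_of_le_pi hang0 (by linarith) hang
    have hcang1 : Real.cos (ang p v) ≤ 1 := Real.cos_le_one _
    have habs : |‖p‖ - ‖v‖| * ‖v‖ ≤ ‖p - v‖ * ‖v‖ * Real.cos q₀ + ‖p‖ * ‖v‖ * (1 - Real.cos β) := by
      have h7 : |(‖p‖ - ‖v‖) * ‖v‖| ≤ |⟪p - v, v⟫| + ‖p‖ * ‖v‖ * (1 - Real.cos (ang p v)) := by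
        rw [hid]
        calc |⟪p - v, v⟫ + ‖p‖ * ‖v‖ * (1 - Real.cos (ang p v))|
            ≤ |⟪p - v, v⟫| + |‖p‖ * ‖v‖ * (1 - Real.cos (ang p v))| := abs_add_le _ _
          _ = |⟪p - v, v⟫| + ‖p‖ * ‖v‖ * (1 - Real.cos (ang p v)) := by
              rw [abs_of_nonneg (mul_nonneg (mul_nonneg hp'.le hv'.le) (by linarith))]
      rw [abs_mul, abs_of_pos hv'] at h7
      have : ‖p‖ * ‖v‖ * (1 - Real.cos (ang p v)) ≤ ‖p‖ * ‖v‖ * (1 - Real.cos β) := by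
        apply mul_le_mul_of_nonneg_left (by linarith) (by positivity)
      linarith
    have hfin : |‖p‖ - ‖v‖| ≤ ‖p - v‖ * Real.cos q₀ + ‖p‖ * (1 - Real.cos β) := by
      have h8 : |‖p‖ - ‖v‖| * ‖v‖ ≤ (‖p - v‖ * Real.cos q₀ + ‖p‖ * (1 - Real.cos β)) * ‖v‖ := by
        calc |‖p‖ - ‖v‖| * ‖v‖ ≤ ‖p - v‖ * ‖v‖ * Real.cos q₀ + ‖p‖ * ‖v‖ * (1 - Real.cos β) := habs
          _ = (‖p - v‖ * Real.cos q₀ + ‖p‖ * (1 - Real.cos β)) * ‖v‖ := by ring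
      exact le_of_mul_le_mul_right h8 hv'
    calc |‖p‖ - ‖v‖| ≤ ‖p - v‖ * Real.cos q₀ + ‖p‖ * (1 - Real.cos β) := hfin
      _ ≤ (R * Real.sin β / Real.sin q₀) * Real.cos q₀ + R * (1 - Real.cos β) := by
          apply add_le_add (mul_le_mul_of_nonneg_right hchord hcq)
          apply mul_le_mul_of_nonneg_right hpR (by linarith)
      _ = R * (Real.sin β * Real.cos q₀ / Real.sin q₀ + (1 - Real.cos β)) := by ring

lemma keytrig (q : ℝ) (h0 : 0 < q) (h1 : q ≤ Real.pi / 2) :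
    3 / 2 * (Real.cos q / Real.sin q) + 3 / 8 * q ≤ Real.cos (q / 2) / Real.sin (q / 2) := by
  have hpi := Real.pi_gt_d6
  have hpi' := Real.pi_lt_d2
  set t := q / 2 with ht
  have ht0 : 0 < t := by positivity
  have ht1 : t ≤ Real.pi / 4 := by rw [ht]; linarith
  have htnum : t ≤ 0.7875 := by linarith
  have hs : 0 < Real.sin t := Real.sin_pos_of_pos_of_lt_pi ht0 (by linarith)
  have hc : 0 < Real.cos t := Real.cos_pos_of_mem_Ioo ⟨by linarith, by linarith⟩
  have hsinq : Real.sin q = 2 * Real.sin t * Real.cos t := by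
    rw [show q = 2 * t by rw [ht]; ring, Real.sin_two_mul]
  have hcosq : Real.cos q = 1 - 2 * Real.sin t ^ 2 := by
    rw [show q = 2 * t by rw [ht]; ring, Real.cos_two_mul']
    nlinarith [Real.sin_sq_add_cos_sq t]
  have hsq : 0 < Real.sin q := by rw [hsinq]; positivity
  have e1 : 3 / 2 * (Real.cos q / Real.sin q) + 3 / 8 * q
      = (3 / 2 * Real.cos q + 3 / 8 * q * Real.sin q) / Real.sin q := by
    field_simp
  rw [e1, div_le_div_iff₀ hsq hs]
  have hst : Real.sin t ≤ t := Real.sin_le ht0.le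
  have hsgt : t - t ^ 3 / 4 < Real.sin t := lt_of_le_of_lt (by have := pow_pos ht0 3; linarith) (Real.sin_gt_sub_cube ht0)
  have hct : Real.cos t ≤ 1 := Real.cos_le_one t
  have key : 3 / 2 * t * (Real.sin t * Real.cos t) ≤ 1 / 2 + Real.sin t ^ 2 := by
    nlinarith [sq_nonneg (Real.sin t - t), sq_nonneg t, mul_pos ht0 hs]
  have hpyt : Real.sin t ^ 2 + Real.cos t ^ 2 = 1 := Real.sin_sq_add_cos_sq t
  rw [hsinq, hcosq]
  have key2 := mul_le_mul_of_nonneg_left key hs.le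
  have hpys : Real.sin t * (Real.sin t ^ 2 + Real.cos t ^ 2) = Real.sin t := by
    rw [hpyt]; ring
  have hq2t : q = 2 * t := by rw [ht]; ring
  rw [hq2t]
  nlinarith [key2, hpys]

set_option maxHeartbeats 2000000 in
lemma core_lemma (q₀ c₀ θ R : ℝ) (S : Set E2)
    (hq0 : 0 < q₀) (hq1 : q₀ ≤ Real.pi / 2) (hc0 : 0 < c₀) (hcq : c₀ ≤ q₀ / 2)
    (hθc : θ ≤ 2 * c₀)
    (hSnorm : ∀ p ∈ S, ‖p‖ ≤ R)
    (A B : E2) (hA : A ∈ S) (hB : B ∈ S) (hA0 : A ≠ 0) (hB0 : B ≠ 0)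
    (hconeA : S ∩ coneDir A c₀ ⊆ coneF q₀ A ∪ coneB q₀ A)
    (hconeB : S ∩ coneDir B c₀ ⊆ coneF q₀ B ∪ coneB q₀ B)
    (X : E2) (hX : X ∈ S) (hX0 : X ≠ 0)
    (z : E2) (hz : z ∈ S) (hz0 : z ≠ 0)
    (da db : ℝ) (hda0 : 0 ≤ da) (hdb0 : 0 ≤ db) (hsum : da + db ≤ θ)
    (hXA : ang X A ≤ da) (hXB : ang X B ≤ db)
    (hzA : ang z A ≤ (da + db) / 2) (hzB : ang z B ≤ (da + db) / 2) :
    ‖X - A‖ ≤ R * θ / Real.sin (q₀ / 2) := by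
  have hpi := Real.pi_pos
  have hθ0 : 0 ≤ θ := le_trans (by linarith) hsum
  have hs2 : 0 < Real.sin (q₀ / 2) :=
    Real.sin_pos_of_pos_of_lt_pi (by linarith) (by linarith)
  have hc2 : 0 < Real.cos (q₀ / 2) := Real.cos_pos_of_mem_Ioo ⟨by linarith, by linarith⟩
  have hsq : 0 < Real.sin q₀ := Real.sin_pos_of_pos_of_lt_pi hq0 (by linarith)
  have hs2q : Real.sin (q₀ / 2) ≤ Real.sin q₀ := sin_le_sin (by linarith) hq1 (by linarith)
  have hXR : ‖X‖ ≤ R := hSnorm X hX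
  have hAR : ‖A‖ ≤ R := hSnorm A hA
  have hBR : ‖B‖ ≤ R := hSnorm B hB
  have hzR : ‖z‖ ≤ R := hSnorm z hz
  have hR : 0 ≤ R := le_trans (norm_nonneg X) hXR
  by_cases heasy : da ≤ c₀
  · -- easy case
    have hXcone : X ∈ coneF q₀ A ∪ coneB q₀ A :=
      hconeA ⟨hX, Set.mem_insert_iff.mpr (Or.inr ⟨hX0, le_trans hXA heasy⟩)⟩
    have hest := cone_estimates A X hA0 hX0 q₀ R da hq0 hq1 hXcone hXA hda0
      (by linarith) hXR
    calc ‖X - A‖ ≤ R * Real.sin da / Real.sin q₀ := hest.1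
      _ ≤ R * θ / Real.sin (q₀ / 2) := by
          apply div_le_div₀ (by positivity)
          · exact mul_le_mul_of_nonneg_left
              (le_trans (Real.sin_le hda0) (by linarith)) hR
          · exact hs2
          · exact hs2q
  · -- hard case
    push_neg at heasy
    have hda_le : da ≤ θ := by linarith
    have hθc0 : c₀ < θ := lt_of_lt_of_le heasy hda_le
    have hθpos : 0 < θ := lt_trans hc0 hθc0
    have hdbθ : db ≤ θ / 2 := by linarith
    have hdbc : db ≤ c₀ := by linarith
    have hσ2 : (da + db) / 2 ≤ θ / 2 := by linarith
    have hσc : (da + db) / 2 ≤ c₀ := by linarith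
    have hθ4 : θ / 2 ≤ Real.pi / 2 := by linarith
    -- cone memberships
    have hXB' : X ∈ coneF q₀ B ∪ coneB q₀ B :=
      hconeB ⟨hX, Set.mem_insert_iff.mpr (Or.inr ⟨hX0, le_trans hXB hdbc⟩)⟩
    have hzA' : z ∈ coneF q₀ A ∪ coneB q₀ A :=
      hconeA ⟨hz, Set.mem_insert_iff.mpr (Or.inr ⟨hz0, le_trans hzA hσc⟩)⟩
    have hzB' : z ∈ coneF q₀ B ∪ coneB q₀ B :=
      hconeB ⟨hz, Set.mem_insert_iff.mpr (Or.inr ⟨hz0, le_trans hzB hσc⟩)⟩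
    -- radial estimates with β = θ/2
    have e1 := (cone_estimates B X hB0 hX0 q₀ R (θ / 2) hq0 hq1 hXB'
      (le_trans hXB hdbθ) (by linarith) hθ4 hXR).2
    have e2 := (cone_estimates B z hB0 hz0 q₀ R (θ / 2) hq0 hq1 hzB'
      (le_trans hzB hσ2) (by linarith) hθ4 hzR).2
    have e3 := (cone_estimates A z hA0 hz0 q₀ R (θ / 2) hq0 hq1 hzA'
      (le_trans hzA hσ2) (by linarith) hθ4 hzR).2
    set ρ := Real.sin (θ / 2) * Real.cos q₀ / Real.sin q₀ + (1 - Real.cos (θ / 2)) with hρ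
    have hΔ : |‖X‖ - ‖A‖| ≤ 3 * (R * ρ) := by
      have t1 : |‖X‖ - ‖A‖| ≤ |‖X‖ - ‖B‖| + |‖B‖ - ‖z‖| + |‖z‖ - ‖A‖| := by
        calc |‖X‖ - ‖A‖| ≤ |‖X‖ - ‖B‖| + |‖B‖ - ‖A‖| := abs_sub_le _ _ _
          _ ≤ |‖X‖ - ‖B‖| + (|‖B‖ - ‖z‖| + |‖z‖ - ‖A‖|) := by
              have := abs_sub_le (‖B‖) (‖z‖) (‖A‖)
              linarith
          _ = |‖X‖ - ‖B‖| + |‖B‖ - ‖z‖| + |‖z‖ - ‖A‖| := by ring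
      have hB1 : |‖B‖ - ‖z‖| = |‖z‖ - ‖B‖| := abs_sub_comm _ _
      rw [hB1] at t1
      calc |‖X‖ - ‖A‖| ≤ |‖X‖ - ‖B‖| + |‖z‖ - ‖B‖| + |‖z‖ - ‖A‖| := t1
        _ ≤ R * ρ + R * ρ + R * ρ := by exact add_le_add (add_le_add e1 e2) e3
        _ = 3 * (R * ρ) := by ring
    -- bound ρ
    have hcosq0 : 0 ≤ Real.cos q₀ := Real.cos_nonneg_of_mem_Icc ⟨by linarith, hq1⟩
    have hρ_le : ρ ≤ (θ / 2) * (Real.cos q₀ / Real.sin q₀) + (θ / 2) ^ 2 / 2 := by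
      rw [hρ]
      have hsin_le : Real.sin (θ / 2) ≤ θ / 2 := Real.sin_le (by linarith)
      have hcos_ge : 1 - (θ / 2) ^ 2 / 2 ≤ Real.cos (θ / 2) := Real.one_sub_sq_div_two_le_cos
      have h1 : Real.sin (θ / 2) * Real.cos q₀ / Real.sin q₀
          ≤ (θ / 2) * (Real.cos q₀ / Real.sin q₀) := by
        rw [mul_div_assoc]
        apply mul_le_mul_of_nonneg_right hsin_le (by positivity)
      linarith
    -- key trig bound
    have hkt := keytrig q₀ hq0 hq1
    have hθq : θ ≤ q₀ := by linarith
    have hΔfin : |‖X‖ - ‖A‖| ≤ R * θ * (Real.cos (q₀ / 2) / Real.sin (q₀ / 2)) := by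
      have h2 : 3 * ρ ≤ 3 / 2 * θ * (Real.cos q₀ / Real.sin q₀) + 3 / 8 * θ ^ 2 := by
        nlinarith [hρ_le, sq_nonneg θ]
      have h3 : 3 / 2 * θ * (Real.cos q₀ / Real.sin q₀) + 3 / 8 * θ ^ 2
          ≤ θ * (Real.cos (q₀ / 2) / Real.sin (q₀ / 2)) := by
        have h4 : 3 / 2 * (Real.cos q₀ / Real.sin q₀) + 3 / 8 * θ
            ≤ Real.cos (q₀ / 2) / Real.sin (q₀ / 2) := by
          have h5 : (3:ℝ) / 8 * θ ≤ 3 / 8 * q₀ := by linarith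
          linarith
        have h6' := mul_le_mul_of_nonneg_left h4 hθ0
        nlinarith [h6']
      calc |‖X‖ - ‖A‖| ≤ 3 * (R * ρ) := hΔ
        _ = R * (3 * ρ) := by ring
        _ ≤ R * (3 / 2 * θ * (Real.cos q₀ / Real.sin q₀) + 3 / 8 * θ ^ 2) :=
            mul_le_mul_of_nonneg_left h2 hR
        _ ≤ R * (θ * (Real.cos (q₀ / 2) / Real.sin (q₀ / 2))) :=
            mul_le_mul_of_nonneg_left h3 hR
        _ = R * θ * (Real.cos (q₀ / 2) / Real.sin (q₀ / 2)) := by ring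
    -- law of cosines
    have hlaw : ‖X - A‖ ^ 2 = (‖X‖ - ‖A‖) ^ 2 + 2 * (‖X‖ * ‖A‖) * (1 - Real.cos (ang X A)) := by
      have h6 : ⟪X, A⟫ = Real.cos (ang X A) * (‖X‖ * ‖A‖) := by
        have h7 : Real.cos (ang X A) = ⟪X, A⟫ / (‖X‖ * ‖A‖) := InnerProductGeometry.cos_angle X A
        have hX' : (0:ℝ) < ‖X‖ := norm_pos_iff.mpr hX0
        have hA' : (0:ℝ) < ‖A‖ := norm_pos_iff.mpr hA0
        rw [h7]; field_simp
      rw [@norm_sub_sq_real _ _ _ X A, h6]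
      ring
    have hcosXA : 1 - Real.cos (ang X A) ≤ θ ^ 2 / 2 := by
      have hangle : ang X A ≤ θ := le_trans hXA hda_le
      have h8 : Real.cos θ ≤ Real.cos (ang X A) :=
        Real.cos_le_cos_of_nonneg_of_le_pi (InnerProductGeometry.angle_nonneg X A)
          (by linarith) hangle
      have h9 : 1 - θ ^ 2 / 2 ≤ Real.cos θ := Real.one_sub_sq_div_two_le_cos
      linarith
    have hsq_bound : ‖X - A‖ ^ 2 ≤ (R * θ / Real.sin (q₀ / 2)) ^ 2 := by
      have hXA_abs : (‖X‖ - ‖A‖) ^ 2 ≤ (R * θ * (Real.cos (q₀ / 2) / Real.sin (q₀ / 2))) ^ 2 := by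
        have := sq_le_sq' (by linarith [abs_nonneg (‖X‖ - ‖A‖), neg_abs_le (‖X‖ - ‖A‖)] : -(R * θ * (Real.cos (q₀ / 2) / Real.sin (q₀ / 2))) ≤ ‖X‖ - ‖A‖) (le_trans (le_abs_self _) hΔfin)
        exact this
      have hXA2 : 2 * (‖X‖ * ‖A‖) * (1 - Real.cos (ang X A)) ≤ R ^ 2 * θ ^ 2 := by
        have hXAn : ‖X‖ * ‖A‖ ≤ R ^ 2 := by
          calc ‖X‖ * ‖A‖ ≤ R * R := mul_le_mul hXR hAR (norm_nonneg A) hR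
            _ = R ^ 2 := (sq R).symm
        have hc1 : 0 ≤ 1 - Real.cos (ang X A) := by
          have := Real.cos_le_one (ang X A); linarith
        calc 2 * (‖X‖ * ‖A‖) * (1 - Real.cos (ang X A)) ≤ 2 * R ^ 2 * (θ ^ 2 / 2) := by
              apply mul_le_mul (by linarith) hcosXA hc1 (by positivity)
          _ = R ^ 2 * θ ^ 2 := by ring
      have hpyt2 : Real.cos (q₀ / 2) ^ 2 + Real.sin (q₀ / 2) ^ 2 = 1 := by
        rw [add_comm]; exact Real.sin_sq_add_cos_sq _
      have hexp : (R * θ * (Real.cos (q₀ / 2) / Real.sin (q₀ / 2))) ^ 2 + R ^ 2 * θ ^ 2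
          = (R * θ / Real.sin (q₀ / 2)) ^ 2 := by
        field_simp
        linear_combination R ^ 2 * hpyt2
      rw [hlaw]
      linarith [hXA_abs, hXA2, hexp.symm.le, hexp.le]
    have hrhs : 0 ≤ R * θ / Real.sin (q₀ / 2) := by positivity
    calc ‖X - A‖ = Real.sqrt (‖X - A‖ ^ 2) := (Real.sqrt_sq (norm_nonneg _)).symm
      _ ≤ Real.sqrt ((R * θ / Real.sin (q₀ / 2)) ^ 2) := Real.sqrt_le_sqrt hsq_bound
      _ = R * θ / Real.sin (q₀ / 2) := Real.sqrt_sq hrhs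

-- segment norm bound
lemma norm_le_of_mem_segment {a b p : E2} (hp : p ∈ segment ℝ a b) :
    ‖p‖ ≤ max ‖a‖ ‖b‖ := by
  obtain ⟨u, v, hu, hv, huv, rfl⟩ := hp
  calc ‖u • a + v • b‖ ≤ ‖u • a‖ + ‖v • b‖ := norm_add_le _ _
    _ = u * ‖a‖ + v * ‖b‖ := by
        rw [norm_smul, norm_smul, Real.norm_eq_abs, Real.norm_eq_abs,
          abs_of_nonneg hu, abs_of_nonneg hv]
    _ ≤ u * max ‖a‖ ‖b‖ + v * max ‖a‖ ‖b‖ := by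
        apply add_le_add
        · exact mul_le_mul_of_nonneg_left (le_max_left _ _) hu
        · exact mul_le_mul_of_nonneg_left (le_max_right _ _) hv
    _ = max ‖a‖ ‖b‖ := by rw [← add_mul, huv, one_mul]

lemma carrier_norm_bound (Γ : Circuit) : ∃ C : ℝ, ∀ p ∈ Γ.carrier, ‖p‖ ≤ C := by
  haveI : NeZero Γ.len := ⟨by have := Γ.four_le; omega⟩
  obtain ⟨i0⟩ : Nonempty (ZMod Γ.len) := ⟨0⟩
  set g : ZMod Γ.len → ℝ := fun i => max ‖toE2 (Γ.f i)‖ ‖toE2 (Γ.f (i + 1))‖ with hg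
  refine ⟨Finset.univ.sup' ⟨i0, Finset.mem_univ i0⟩ g, ?_⟩
  intro p hp
  rw [Circuit.carrier, Set.mem_iUnion] at hp
  obtain ⟨i, hi⟩ := hp
  calc ‖p‖ ≤ g i := norm_le_of_mem_segment hi
    _ ≤ _ := Finset.le_sup' g (Finset.mem_univ i)

lemma carrier_nonempty (Γ : Circuit) : Γ.carrier.Nonempty := by
  haveI : NeZero Γ.len := ⟨by have := Γ.four_le; omega⟩
  exact ⟨toE2 (Γ.f 0), Set.mem_iUnion.mpr ⟨0, left_mem_segment _ _ _⟩⟩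

lemma norm_le_R (Γ : Circuit) (R : ℝ) (hR : R = sSup ((fun z : E2 => ‖z‖) '' Γ.carrier)) :
    ∀ p ∈ Γ.carrier, ‖p‖ ≤ R := by
  obtain ⟨C, hC⟩ := carrier_norm_bound Γ
  intro p hp
  rw [hR]
  apply le_csSup
  · refine ⟨C, ?_⟩
    rintro r ⟨q, hq, rfl⟩
    exact hC q hq
  · exact ⟨p, hp, rfl⟩

lemma R_nonneg (Γ : Circuit) (R : ℝ) (hR : R = sSup ((fun z : E2 => ‖z‖) '' Γ.carrier)) :
    0 ≤ R := by
  obtain ⟨p, hp⟩ := carrier_nonempty Γ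
  exact le_trans (norm_nonneg p) (norm_le_R Γ R hR p hp)

-- the ray from the origin meets the circuit
lemma ray_meets (Γ : Circuit) (h0 : (0 : E2) ∈ INT Γ.carrier) (φ : ℝ) :
    ∃ t : ℝ, 0 < t ∧ t • dirE φ ∈ Γ.carrier := by
  have h0' : (0 : E2) ∉ Γ.carrier := h0.1
  have hbdd : Bornology.IsBounded (connectedComponentIn Γ.carrierᶜ 0) := h0.2
  by_contra hcon
  push_neg at hcon
  set Ray : Set E2 := (fun t : ℝ => t • dirE φ) '' Set.Ici 0 with hRay
  have hRayC : Ray ⊆ Γ.carrierᶜ := by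
    rintro p ⟨t, ht, rfl⟩
    rcases eq_or_lt_of_le (Set.mem_Ici.mp ht : (0:ℝ) ≤ t) with rfl | htpos
    · simpa using h0'
    · intro hmem
      exact absurd hmem (hcon t htpos)
  have hconn : IsPreconnected Ray :=
    isPreconnected_Ici.image _ (Continuous.continuousOn (by continuity))
  have h0Ray : (0 : E2) ∈ Ray := ⟨0, Set.self_mem_Ici, by simp⟩
  have hsub : Ray ⊆ connectedComponentIn Γ.carrierᶜ 0 :=
    hconn.subset_connectedComponentIn h0Ray hRayC
  have hRayBdd : Bornology.IsBounded Ray := hbdd.subset hsub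
  obtain ⟨r, hr⟩ := (Metric.isBounded_iff_subset_closedBall 0).mp hRayBdd
  have hmax : (0:ℝ) ≤ max r 0 := le_max_right r 0
  have hmem : (max r 0 + 1) • dirE φ ∈ Ray := ⟨max r 0 + 1, Set.mem_Ici.mpr (by linarith), rfl⟩
  have := hr hmem
  rw [Metric.mem_closedBall, dist_zero_right, norm_smul_dirE _ _ (by linarith)] at this
  have h1 : r ≤ max r 0 := le_max_left _ _
  linarith

-- finiteness of RG
lemma RG_finite (Γ : Circuit) (q₀ c₀ : ℝ) (R : ℝ)
    (hR : R = sSup ((fun z : E2 => ‖z‖) '' Γ.carrier)) :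
    (RG q₀ c₀ Γ.carrier).Finite := by
  have hbound := norm_le_R Γ R hR
  apply Set.Finite.subset (Set.finite_Icc ((-⌈R⌉, -⌈R⌉) : Z2) ((⌈R⌉, ⌈R⌉) : Z2))
  intro v hv
  have hvc : toE2 v ∈ Γ.carrier := hv.1
  have hn : ‖toE2 v‖ ≤ R := hbound _ hvc
  have h0 : |(v.1 : ℝ)| ≤ R := by
    have h := normsq2 (toE2 v)
    have h1 : (toE2 v) 0 = (v.1 : ℝ) := rfl
    have h2 : |(v.1 : ℝ)| ≤ ‖toE2 v‖ := by
      rw [← Real.sqrt_sq_eq_abs, ← Real.sqrt_sq (norm_nonneg (toE2 v))]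
      apply Real.sqrt_le_sqrt
      rw [← h1]
      nlinarith [sq_nonneg ((toE2 v) 1)]
    linarith
  have h1 : |(v.2 : ℝ)| ≤ R := by
    have h := normsq2 (toE2 v)
    have h1 : (toE2 v) 1 = (v.2 : ℝ) := rfl
    have h2 : |(v.2 : ℝ)| ≤ ‖toE2 v‖ := by
      rw [← Real.sqrt_sq_eq_abs, ← Real.sqrt_sq (norm_nonneg (toE2 v))]
      apply Real.sqrt_le_sqrt
      rw [← h1]
      nlinarith [sq_nonneg ((toE2 v) 0)]
    linarith
  rw [abs_le] at h0 h1
  constructor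
  · constructor
    · have : -R ≤ (v.1 : ℝ) := h0.1
      have h3 : -(⌈R⌉ : ℝ) ≤ (v.1 : ℝ) := le_trans (by simpa using neg_le_neg (Int.le_ceil R)) this
      exact_mod_cast h3
    · have : -R ≤ (v.2 : ℝ) := h1.1
      have h3 : -(⌈R⌉ : ℝ) ≤ (v.2 : ℝ) := le_trans (by simpa using neg_le_neg (Int.le_ceil R)) this
      exact_mod_cast h3
  · constructor
    · have h3 : (v.1 : ℝ) ≤ (⌈R⌉ : ℝ) := le_trans h0.2 (Int.le_ceil R)
      exact_mod_cast h3
    · have h3 : (v.2 : ℝ) ≤ (⌈R⌉ : ℝ) := le_trans h1.2 (Int.le_ceil R)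
      exact_mod_cast h3

lemma Tset_bddAbove (q₀ c₀ : ℝ) (S : Set E2) :
    BddAbove {r : ℝ | r ∈ Set.Icc 0 (2 * Real.pi) ∧
      ∃ a : E2, ‖a‖ = 1 ∧ coneDir a (r / 2) ∩ (toE2 '' RG q₀ c₀ S) = ∅} :=
  ⟨2 * Real.pi, fun r hr => hr.1.2⟩

lemma theta_nonneg (q₀ c₀ : ℝ) (S : Set E2) : 0 ≤ thetaRGMax q₀ c₀ S :=
  Real.sSup_nonneg (fun r hr => hr.1.1)

lemma RG_nonempty (Γ : Circuit) (q₀ c₀ : ℝ) (hq0 : 0 < q₀) (hq1 : q₀ < Real.pi / 2)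
    (hc : 0 < c₀ ∧ c₀ ≤ q₀ / 2) (hθ : thetaRGMax q₀ c₀ Γ.carrier ≤ 2 * c₀) :
    (RG q₀ c₀ Γ.carrier).Nonempty := by
  have hpi := Real.pi_pos
  rw [Set.nonempty_iff_ne_empty]
  intro hemp
  have h2π : 2 * Real.pi ∈ {r : ℝ | r ∈ Set.Icc 0 (2 * Real.pi) ∧
      ∃ a : E2, ‖a‖ = 1 ∧ coneDir a (r / 2) ∩ (toE2 '' RG q₀ c₀ Γ.carrier) = ∅} := by
    refine ⟨⟨by linarith, le_refl _⟩, dirE 0, norm_dirE 0, ?_⟩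
    rw [hemp]
    simp
  have := le_csSup (Tset_bddAbove q₀ c₀ Γ.carrier) h2π
  have h3 : thetaRGMax q₀ c₀ Γ.carrier ≤ 2 * c₀ := hθ
  rw [thetaRGMax] at *
  linarith

lemma mod2pi_add_neg (a : ℝ) :
    mod2pi a + mod2pi (-a) = 0 ∨ mod2pi a + mod2pi (-a) = 2 * Real.pi := by
  have hpi := Real.pi_pos
  have key : mod2pi a + mod2pi (-a)
      = -(2 * Real.pi) * (⌊a / (2 * Real.pi)⌋ + ⌊-(a / (2 * Real.pi))⌋) := by
    rw [mod2pi, mod2pi, neg_div]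
    push_cast
    ring
  have h2 : ⌊a / (2 * Real.pi)⌋ + ⌊-(a / (2 * Real.pi))⌋ = 0 ∨
      ⌊a / (2 * Real.pi)⌋ + ⌊-(a / (2 * Real.pi))⌋ = -1 := by
    set u := a / (2 * Real.pi)
    rw [Int.floor_neg]
    have := Int.ceil_le_floor_add_one u
    have := Int.floor_le_ceil u
    omega
  rcases h2 with h | h
  · left
    have hcast : ((⌊a / (2 * Real.pi)⌋ : ℝ) + (⌊-(a / (2 * Real.pi))⌋ : ℝ)) = 0 := by
      exact_mod_cast h
    rw [key]; rw [show ((⌊a / (2 * Real.pi)⌋ : ℝ) + (⌊-(a / (2 * Real.pi))⌋ : ℝ)) = 0 from hcast]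
    ring
  · right
    have hcast : ((⌊a / (2 * Real.pi)⌋ : ℝ) + (⌊-(a / (2 * Real.pi))⌋ : ℝ)) = -1 := by
      exact_mod_cast h
    rw [key]; rw [show ((⌊a / (2 * Real.pi)⌋ : ℝ) + (⌊-(a / (2 * Real.pi))⌋ : ℝ)) = -1 from hcast]
    ring

lemma cos_le_of_window {h lam : ℝ} (hh0 : 0 ≤ h) (hhpi : h ≤ Real.pi)
    (hl : h ≤ lam) (hr : lam ≤ 2 * Real.pi - h) : Real.cos lam ≤ Real.cos h := by
  have hpi := Real.pi_pos
  by_cases hcase : lam ≤ Real.pi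
  · exact Real.cos_le_cos_of_nonneg_of_le_pi hh0 hcase hl
  · push_neg at hcase
    have h1 : Real.cos lam = Real.cos (2 * Real.pi - lam) := (Real.cos_two_pi_sub lam).symm
    rw [h1]
    apply Real.cos_le_cos_of_nonneg_of_le_pi hh0 (by linarith) (by linarith)

lemma cos_dirE_of_ang_le (t φ : ℝ) (w : E2) (ht : 0 < t) (hw : w ≠ 0) (d : ℝ)
    (hdpi : d ≤ Real.pi) (h : ang (t • dirE φ) w ≤ d) :
    Real.cos d ≤ Real.cos (φ - argOf w) := by
  have hnw : ‖w‖ ≠ 0 := by simpa using hw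
  have h1 : Real.cos (ang (t • dirE φ) w) = ⟪t • dirE φ, w⟫ / (‖t • dirE φ‖ * ‖w‖) :=
    InnerProductGeometry.cos_angle _ _
  rw [inner_smul_dirE t φ w hw, norm_smul_dirE t φ ht.le] at h1
  have h2 : Real.cos (ang (t • dirE φ) w) = Real.cos (φ - argOf w) := by
    rw [h1]; field_simp
  rw [← h2]
  exact Real.cos_le_cos_of_nonneg_of_le_pi (InnerProductGeometry.angle_nonneg _ _) hdpi h

lemma ang_eq_disp (x u : E2) (hx : x ≠ 0) (hu : u ≠ 0) (h : ccwDisp x u ≤ Real.pi) :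
    ang x u = ccwDisp x u := by
  rw [ccwDisp] at h ⊢
  rw [ang_eq_arccos x u hx hu]
  have h1 : Real.cos (argOf x - argOf u) = Real.cos (mod2pi (argOf u - argOf x)) := by
    rw [show argOf x - argOf u = -(argOf u - argOf x) by ring, Real.cos_neg, cos_mod2pi]
  rw [h1, Real.arccos_cos (mod2pi_nonneg _) h]

lemma ang_eq_disp' (x u : E2) (hx : x ≠ 0) (hu : u ≠ 0) (h : ccwDisp u x ≤ Real.pi) :
    ang x u = ccwDisp u x := by
  rw [ccwDisp] at h ⊢
  rw [ang_eq_arccos x u hx hu]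
  have h1 : Real.cos (argOf x - argOf u) = Real.cos (mod2pi (argOf x - argOf u)) := by
    rw [cos_mod2pi]
  rw [h1, Real.arccos_cos (mod2pi_nonneg _) h]

lemma gap_le_theta (q₀ c₀ : ℝ) (S : Set E2) (h0S : (0:E2) ∉ S)
    (hθpi : thetaRGMax q₀ c₀ S < 2 * Real.pi)
    (X : E2) (hX0 : X ≠ 0)
    (P Q : Z2) (hP : P ∈ RG q₀ c₀ S) (hQ : Q ∈ RG q₀ c₀ S)
    (hPmin : ∀ w ∈ RG q₀ c₀ S, ccwDisp X (toE2 P) ≤ ccwDisp X (toE2 w))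
    (hQmin : ∀ w ∈ RG q₀ c₀ S, ccwDisp (toE2 Q) X ≤ ccwDisp (toE2 w) X) :
    ccwDisp X (toE2 P) + ccwDisp (toE2 Q) X ≤ thetaRGMax q₀ c₀ S := by
  have hpi := Real.pi_pos
  set θ := thetaRGMax q₀ c₀ S with hθdef
  have hθ0 : 0 ≤ θ := theta_nonneg q₀ c₀ S
  set δ₁ := ccwDisp X (toE2 P) with hδ₁
  set δ₂ := ccwDisp (toE2 Q) X with hδ₂
  have hδ₁0 : 0 ≤ δ₁ := mod2pi_nonneg _
  have hδ₂0 : 0 ≤ δ₂ := mod2pi_nonneg _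
  -- δ₁ + δ₂ ≤ 2π
  have hσ2π : δ₁ + δ₂ ≤ 2 * Real.pi := by
    have h1 : δ₂ ≤ ccwDisp (toE2 P) X := hQmin P hP
    have h2 : ccwDisp X (toE2 P) + ccwDisp (toE2 P) X ≤ 2 * Real.pi := by
      have h3 := mod2pi_add_neg (argOf (toE2 P) - argOf X)
      have h4 : ccwDisp (toE2 P) X = mod2pi (-(argOf (toE2 P) - argOf X)) := by
        rw [ccwDisp, neg_sub]
      rw [ccwDisp, h4]
      rcases h3 with h | h
      · linarith
      · linarith
    linarith
  by_contra hcon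
  push_neg at hcon
  set σ := δ₁ + δ₂ with hσ
  set r := (θ + σ) / 2 with hr
  have hr1 : θ < r := by rw [hr]; linarith
  have hr2 : r < σ := by rw [hr]; linarith
  have hr0 : 0 ≤ r := by rw [hr]; linarith
  have hr2π : r < 2 * Real.pi := by rw [hr]; linarith
  set φm := argOf X + (δ₁ - δ₂) / 2 with hφm
  have hclaim : coneDir (dirE φm) (r / 2) ∩ (toE2 '' RG q₀ c₀ S) = ∅ := by
    rw [Set.eq_empty_iff_forall_notMem]
    rintro y ⟨hy1, w, hw, rfl⟩
    have hy0 : toE2 w ≠ 0 := by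
      intro h
      exact h0S (h ▸ hw.1)
    have hang : ang (toE2 w) (dirE φm) ≤ r / 2 := by
      rcases Set.mem_insert_iff.mp hy1 with h | h
      · exact absurd h.symm (fun hh => hy0 hh.symm)
      · exact h.2
    have hang' : ang ((1:ℝ) • dirE φm) (toE2 w) ≤ r / 2 := by
      rw [one_smul]
      rw [show ang (dirE φm) (toE2 w) = ang (toE2 w) (dirE φm) from
        InnerProductGeometry.angle_comm _ _]
      exact hang
    have hcosr : Real.cos (r / 2) ≤ Real.cos (φm - argOf (toE2 w)) :=
      cos_dirE_of_ang_le 1 φm (toE2 w) one_pos hy0 (r / 2) (by linarith) hang'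
    set g := ccwDisp X (toE2 w) with hgdef
    set g' := ccwDisp (toE2 w) X with hg'def
    have hg : δ₁ ≤ g := hPmin w hw
    have hg' : δ₂ ≤ g' := hQmin w hw
    have hg0 : 0 ≤ g := mod2pi_nonneg _
    have hg'0 : 0 ≤ g' := mod2pi_nonneg _
    have hsum_g : g + g' = 0 ∨ g + g' = 2 * Real.pi := by
      have h3 := mod2pi_add_neg (argOf (toE2 w) - argOf X)
      have h4 : g' = mod2pi (-(argOf (toE2 w) - argOf X)) := by
        rw [hg'def, ccwDisp, neg_sub]
      rw [hgdef, ccwDisp, h4]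
      exact h3
    rcases hsum_g with h | h
    · have : g = 0 ∧ g' = 0 := ⟨by linarith, by linarith⟩
      have hδ0 : δ₁ = 0 ∧ δ₂ = 0 := ⟨by linarith [this.1], by linarith [this.2]⟩
      rw [hσ, hδ0.1, hδ0.2] at hcon
      linarith
    · have hgub : g ≤ 2 * Real.pi - δ₂ := by linarith
      set lam := g - (δ₁ - δ₂) / 2 with hlam
      have hlam1 : σ / 2 ≤ lam := by rw [hlam, hσ]; linarith
      have hlam2 : lam ≤ 2 * Real.pi - σ / 2 := by rw [hlam, hσ]; linarith
      have hcoseq : Real.cos (φm - argOf (toE2 w)) = Real.cos lam := by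
        obtain ⟨k, hk⟩ := mod2pi_sub (argOf (toE2 w) - argOf X)
        have heq : φm - argOf (toE2 w) = -(lam + k * (2 * Real.pi)) := by
          rw [hφm, hlam, hgdef, ccwDisp]
          have : argOf (toE2 w) - argOf X = mod2pi (argOf (toE2 w) - argOf X)
              + 2 * Real.pi * k := by linarith [hk]
          linarith [this]
        rw [heq, Real.cos_neg, Real.cos_add_int_mul_two_pi]
      have hwin : Real.cos lam ≤ Real.cos (σ / 2) := by
        apply cos_le_of_window (by linarith) (by linarith) hlam1 hlam2
      have hstrict : Real.cos (σ / 2) < Real.cos (r / 2) :=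
        Real.cos_lt_cos_of_nonneg_of_le_pi (by linarith) (by linarith) (by linarith)
      rw [hcoseq] at hcosr
      linarith
  have hrT : r ∈ {r : ℝ | r ∈ Set.Icc 0 (2 * Real.pi) ∧
      ∃ a : E2, ‖a‖ = 1 ∧ coneDir a (r / 2) ∩ (toE2 '' RG q₀ c₀ S) = ∅} :=
    ⟨⟨hr0, hr2π.le⟩, dirE φm, norm_dirE φm, hclaim⟩
  have := le_csSup (Tset_bddAbove q₀ c₀ S) hrT
  rw [hθdef, thetaRGMax] at hr1
  rw [thetaRGMax] at hθdef
  linarith [hr1, this]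

set_option maxHeartbeats 1000000 in
lemma main_step (q₀ c₀ R : ℝ) (Γ : Circuit) (hq : q₀ ∈ Set.Ioo 0 (Real.pi / 2))
    (hc : c₀ ∈ Set.Ioc 0 (q₀ / 2)) (h0 : (0 : E2) ∈ INT Γ.carrier)
    (hR : R = sSup ((fun z : E2 => ‖z‖) '' Γ.carrier))
    (hθ : thetaRGMax q₀ c₀ Γ.carrier ≤ 2 * c₀)
    (x : Z2) (hx : toE2 x ∈ Γ.carrier)
    (P Q : Z2) (hP : P ∈ RG q₀ c₀ Γ.carrier) (hQ : Q ∈ RG q₀ c₀ Γ.carrier)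
    (hPmin : ∀ w ∈ RG q₀ c₀ Γ.carrier, ccwDisp (toE2 x) (toE2 P) ≤ ccwDisp (toE2 x) (toE2 w))
    (hQmin : ∀ w ∈ RG q₀ c₀ Γ.carrier, ccwDisp (toE2 Q) (toE2 x) ≤ ccwDisp (toE2 w) (toE2 x)) :
    dist (toE2 x) (toE2 P) ≤ R * (Real.sin (q₀ / 2))⁻¹ * thetaRGMax q₀ c₀ Γ.carrier ∧
    dist (toE2 x) (toE2 Q) ≤ R * (Real.sin (q₀ / 2))⁻¹ * thetaRGMax q₀ c₀ Γ.carrier := by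
  obtain ⟨hq0, hq1⟩ := hq
  obtain ⟨hc0, hcq⟩ := hc
  have hpi := Real.pi_pos
  set S := Γ.carrier with hS
  set θ := thetaRGMax q₀ c₀ S with hθdef
  have hθ0 : 0 ≤ θ := theta_nonneg q₀ c₀ S
  have h0S : (0:E2) ∉ S := h0.1
  set X := toE2 x with hX
  have hX0 : X ≠ 0 := fun h => h0S (h ▸ hx)
  have hP0 : toE2 P ≠ 0 := fun h => h0S (h ▸ hP.1)
  have hQ0 : toE2 Q ≠ 0 := fun h => h0S (h ▸ hQ.1)
  have hSnorm : ∀ p ∈ S, ‖p‖ ≤ R := norm_le_R Γ R hR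
  -- gap bound
  have hθpi : θ < 2 * Real.pi := by
    calc θ ≤ 2 * c₀ := hθ
      _ ≤ q₀ := by linarith
      _ < 2 * Real.pi := by linarith
  have hgap : ccwDisp X (toE2 P) + ccwDisp (toE2 Q) X ≤ θ :=
    gap_le_theta q₀ c₀ S h0S hθpi X hX0 P Q hP hQ hPmin hQmin
  set δ₁ := ccwDisp X (toE2 P) with hδ₁
  set δ₂ := ccwDisp (toE2 Q) X with hδ₂
  have hδ₁0 : 0 ≤ δ₁ := mod2pi_nonneg _
  have hδ₂0 : 0 ≤ δ₂ := mod2pi_nonneg _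
  set σ := δ₁ + δ₂ with hσ
  have hσθ : σ ≤ θ := hgap
  have hσπ : σ ≤ Real.pi := by
    calc σ ≤ θ := hσθ
      _ ≤ 2 * c₀ := hθ
      _ ≤ q₀ := by linarith
      _ ≤ Real.pi := by linarith
  -- angles from displacements
  have hangXP : ang X (toE2 P) ≤ δ₁ := by
    rw [ang_eq_disp X (toE2 P) hX0 hP0 (by rw [← hδ₁]; linarith)]
  have hangXQ : ang X (toE2 Q) ≤ δ₂ := by
    rw [ang_eq_disp' X (toE2 Q) hX0 hQ0 (by rw [← hδ₂]; linarith)]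
  -- construct z on the bisector ray
  set φ := argOf X + (δ₁ - δ₂) / 2 with hφ
  obtain ⟨t, ht, hzS⟩ := ray_meets Γ h0 φ
  set z := t • dirE φ with hz
  have hznorm : ‖z‖ = t := norm_smul_dirE t φ ht.le
  have hz0 : z ≠ 0 := by
    intro h
    rw [h, norm_zero] at hznorm
    exact (ne_of_gt ht) hznorm.symm
  have hcosP : Real.cos (φ - argOf (toE2 P)) = Real.cos (σ / 2) := by
    obtain ⟨k, hk⟩ := mod2pi_sub (argOf (toE2 P) - argOf X)
    have hk' : argOf (toE2 P) - argOf X = δ₁ + 2 * Real.pi * k := by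
      rw [hδ₁, show ccwDisp X (toE2 P) = mod2pi (argOf (toE2 P) - argOf X) from rfl]
      linarith [hk]
    have heq : φ - argOf (toE2 P) = -(σ / 2 + k * (2 * Real.pi)) := by
      rw [hφ, hσ]
      linarith [hk']
    rw [heq, Real.cos_neg, Real.cos_add_int_mul_two_pi]
  have hcosQ : Real.cos (φ - argOf (toE2 Q)) = Real.cos (σ / 2) := by
    obtain ⟨k, hk⟩ := mod2pi_sub (argOf X - argOf (toE2 Q))
    have hk' : argOf X - argOf (toE2 Q) = δ₂ + 2 * Real.pi * k := by
      rw [hδ₂, show ccwDisp (toE2 Q) X = mod2pi (argOf X - argOf (toE2 Q)) from rfl]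
      linarith [hk]
    have heq : φ - argOf (toE2 Q) = σ / 2 + k * (2 * Real.pi) := by
      rw [hφ, hσ]
      linarith [hk']
    rw [heq, Real.cos_add_int_mul_two_pi]
  have hzP : ang z (toE2 P) ≤ σ / 2 :=
    ang_smul_dirE_le t φ (toE2 P) ht hP0 (σ / 2) (by linarith) (by linarith) hcosP.ge
  have hzQ : ang z (toE2 Q) ≤ σ / 2 :=
    ang_smul_dirE_le t φ (toE2 Q) ht hQ0 (σ / 2) (by linarith) (by linarith) hcosQ.ge
  have hs2 : 0 < Real.sin (q₀ / 2) :=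
    Real.sin_pos_of_pos_of_lt_pi (by linarith) (by linarith)
  have hrw : R * θ / Real.sin (q₀ / 2) = R * (Real.sin (q₀ / 2))⁻¹ * θ := by
    rw [div_eq_mul_inv]; ring
  constructor
  · rw [dist_eq_norm, ← hrw]
    exact core_lemma q₀ c₀ θ R S hq0 (by linarith) hc0 hcq hθ hSnorm
      (toE2 P) (toE2 Q) hP.1 hQ.1 hP0 hQ0 hP.2 hQ.2 X hx hX0 z hzS hz0
      δ₁ δ₂ hδ₁0 hδ₂0 hσθ hangXP hangXQ hzP hzQ
  · rw [dist_eq_norm, ← hrw]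
    have hσ' : δ₂ + δ₁ ≤ θ := by linarith
    have hzQ' : ang z (toE2 Q) ≤ (δ₂ + δ₁) / 2 := by
      rw [show (δ₂ + δ₁) / 2 = σ / 2 by rw [hσ]; ring]
      exact hzQ
    have hzP' : ang z (toE2 P) ≤ (δ₂ + δ₁) / 2 := by
      rw [show (δ₂ + δ₁) / 2 = σ / 2 by rw [hσ]; ring]
      exact hzP
    exact core_lemma q₀ c₀ θ R S hq0 (by linarith) hc0 hcq hθ hSnorm
      (toE2 Q) (toE2 P) hQ.1 hP.1 hQ0 hP0 hQ.2 hP.2 X hx hX0 z hzS hz0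
      δ₂ δ₁ hδ₂0 hδ₁0 hσ' hangXQ hangXP hzQ' hzP'


end MprgAux

/-- **Point-to-regeneration-site distance.** For a circuit `Γ` around the origin with
`R = sup {‖z‖ : z ∈ Γ}`, if `θ_RG^MAX(Γ) ≤ 2 c₀` then `RG(Γ) ≠ ∅` and
`MPRG(Γ) ≤ R csc(q₀/2) θ_RG^MAX(Γ)`. -/
theorem mprg_le (q₀ c₀ : ℝ) (hq : q₀ ∈ Set.Ioo 0 (Real.pi / 2))
    (hc : c₀ ∈ Set.Ioc 0 (q₀ / 2)) (Γ : Circuit) (h0 : (0 : E2) ∈ INT Γ.carrier)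
    (R : ℝ) (hR : R = sSup ((fun z : E2 => ‖z‖) '' Γ.carrier))
    (hθ : thetaRGMax q₀ c₀ Γ.carrier ≤ 2 * c₀) :
    (RG q₀ c₀ Γ.carrier).Nonempty ∧
      MPRG q₀ c₀ Γ.carrier ≤ R * (Real.sin (q₀ / 2))⁻¹ * thetaRGMax q₀ c₀ Γ.carrier := by
  obtain ⟨hq0, hq1⟩ := hq
  obtain ⟨hc0, hcq⟩ := hc
  have hpi := Real.pi_pos
  have hne : (RG q₀ c₀ Γ.carrier).Nonempty := RG_nonempty Γ q₀ c₀ hq0 hq1 ⟨hc0, hcq⟩ hθ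
  refine ⟨hne, ?_⟩
  have hs2 : 0 < Real.sin (q₀ / 2) :=
    Real.sin_pos_of_pos_of_lt_pi (by linarith) (by linarith)
  have hR0 : 0 ≤ R := R_nonneg Γ R hR
  have hθ0 : 0 ≤ thetaRGMax q₀ c₀ Γ.carrier := theta_nonneg q₀ c₀ Γ.carrier
  rw [MPRG]
  apply Real.sSup_le
  · rintro d ⟨x, hx, u, ⟨huRG, hucase⟩, rfl⟩
    have hfin : (RG q₀ c₀ Γ.carrier).Finite := RG_finite Γ q₀ c₀ R hR
    obtain ⟨Pm, hPm, hPmin⟩ :=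
      Set.exists_min_image _ (fun w => ccwDisp (toE2 x) (toE2 w)) hfin hne
    obtain ⟨Qm, hQm, hQmin⟩ :=
      Set.exists_min_image _ (fun w => ccwDisp (toE2 w) (toE2 x)) hfin hne
    rcases hucase with hcase | hcase
    · exact (main_step q₀ c₀ R Γ ⟨hq0, hq1⟩ ⟨hc0, hcq⟩ h0 hR hθ x hx u Qm huRG hQm
        hcase hQmin).1
    · exact (main_step q₀ c₀ R Γ ⟨hq0, hq1⟩ ⟨hc0, hcq⟩ h0 hR hθ x hx Pm u hPm huRG
        hPmin hcase).2
  · positivity
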